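/- Let s = (s_n) be an increasing weight whose discrete derivative is essentially decreasing, and suppose inf_n sup_k s_k/s_{kn} > 0. Then there exists a sequence of disjointly supported vectors in m(s) that is equivalent to the unit vector basis of ℓ₁. -/

import Mathlib

open Finset

def marcSet (s : ℕ → ℝ) (f : ℕ → ℝ) : Set ℝ :=
  {r : ℝ | ∃ A : Finset ℕ, A.Nonempty ∧ r = (∑ j ∈ A, |f j|) / s A.card}

noncomputable def marcNorm (s : ℕ → ℝ) (f : ℕ → ℝ) : ℝ := sSup (marcSet s f)

def MemMarc (s : ℕ → ℝ) (f : ℕ → ℝ) : Prop := BddAbove (marcSet s f)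

set_option linter.dupNamespace false
set_option linter.unusedSectionVars false


namespace MarcAux

noncomputable def w (s : ℕ → ℝ) (n : ℕ) : ℝ := if n = 1 then s 1 else s n - s (n - 1)

lemma sum_w (s : ℕ → ℝ) : ∀ r, 1 ≤ r → ∑ l ∈ Finset.Icc 1 r, w s l = s r := by
  intro r hr
  induction r with
  | zero => omega
  | succ r ih =>
    rcases Nat.lt_or_ge 1 (r+1) with h | h
    · have hr1 : 1 ≤ r := by omega
      rw [Finset.sum_Icc_succ_top (by omega), ih hr1]
      have : w s (r+1) = s (r+1) - s r := by
        simp only [w, if_neg (by omega : ¬ r + 1 = 1)]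
        congr 1
      rw [this]; ring
    · have : r = 0 := by omega
      subst this
      simp [w]

lemma sub_sum_w (s : ℕ → ℝ) (r k : ℕ) (hr : 1 ≤ r) (hrk : r ≤ k) :
    s k - s r = ∑ i ∈ Finset.Icc (r+1) k, w s i := by
  have h1 : Finset.Icc 1 k = Finset.Icc 1 r ∪ Finset.Icc (r+1) k := by
    ext x; simp only [Finset.mem_Icc, Finset.mem_union]; omega
  have hd : Disjoint (Finset.Icc 1 r) (Finset.Icc (r+1) k) := by
    rw [Finset.disjoint_left]; intro x hx hx'
    simp only [Finset.mem_Icc] at hx hx'; omega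
  have := Finset.sum_union (f := w s) hd
  rw [← h1] at this
  rw [sum_w s k (le_trans hr hrk), sum_w s r hr] at this
  linarith

/-- Key lemma: `c * (r * s k) ≤ (c+1) * (k * s r)` for `1 ≤ r ≤ k`. -/
lemma key (s : ℕ → ℝ) (c : ℝ) (hc : 0 < c)
    (hpos : ∀ n, 1 ≤ n → 0 < s n)
    (hw : ∀ m n, 1 ≤ m → m ≤ n → c * w s n ≤ w s m)
    (r k : ℕ) (hr : 1 ≤ r) (hrk : r ≤ k) :
    c * ((r:ℝ) * s k) ≤ (c+1) * ((k:ℝ) * s r) := by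
  have hsr : 0 < s r := hpos r hr
  -- each w i for i ≥ r satisfies c * r * w i ≤ s r
  have hwi : ∀ i, r ≤ i → c * w s i * r ≤ s r := by
    intro i hi
    have : ∀ l ∈ Finset.Icc 1 r, c * w s i ≤ w s l := by
      intro l hl
      simp only [Finset.mem_Icc] at hl
      exact hw l i hl.1 (le_trans hl.2 hi)
    calc c * w s i * r = ∑ _l ∈ Finset.Icc 1 r, c * w s i := by
          rw [Finset.sum_const, Nat.card_Icc]; simp; ring
      _ ≤ ∑ l ∈ Finset.Icc 1 r, w s l := Finset.sum_le_sum this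
      _ = s r := sum_w s r hr
  have hsum : c * (s k - s r) * r ≤ ((k:ℝ) - r) * s r := by
    rw [sub_sum_w s r k hr hrk]
    have : ∀ i ∈ Finset.Icc (r+1) k, c * w s i * r ≤ s r := by
      intro i hi; simp only [Finset.mem_Icc] at hi; exact hwi i (by omega)
    calc c * (∑ i ∈ Finset.Icc (r+1) k, w s i) * r
        = ∑ i ∈ Finset.Icc (r+1) k, c * w s i * r := by
          rw [Finset.mul_sum, Finset.sum_mul]
      _ ≤ ∑ _i ∈ Finset.Icc (r+1) k, s r := Finset.sum_le_sum this
      _ = ((k:ℝ) - r) * s r := by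
          rw [Finset.sum_const, Nat.card_Icc, nsmul_eq_mul]
          congr 1
          have : k + 1 - (r+1) = k - r := by omega
          rw [this, Nat.cast_sub hrk]
  have hrk' : (r:ℝ) ≤ k := by exact_mod_cast hrk
  have hr' : (1:ℝ) ≤ r := by exact_mod_cast hr
  nlinarith [mul_pos hc hsr, mul_nonneg hc.le hsr.le]

/-- geometric sum bound -/
lemma geom_le_two (I : Finset ℕ) : ∑ i ∈ I, ((1:ℝ)/2) ^ i ≤ 2 := by
  obtain ⟨n, hn⟩ := I.exists_nat_subset_range
  calc ∑ i ∈ I, ((1:ℝ)/2) ^ i ≤ ∑ i ∈ Finset.range n, ((1:ℝ)/2) ^ i :=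
        Finset.sum_le_sum_of_subset_of_nonneg hn (by intros; positivity)
    _ = (((1:ℝ)/2) ^ n - 1) / ((1:ℝ)/2 - 1) := geom_sum_eq (by norm_num) n
    _ ≤ 2 := by
        rw [div_le_iff_of_neg (by norm_num)]
        have : (0:ℝ) ≤ (1/2) ^ n := by positivity
        nlinarith

lemma geom_image_le_two (T : Finset ℕ) (e : ℕ → ℕ)
    (he : ∀ x ∈ T, ∀ y ∈ T, e x = e y → x = y) :
    ∑ j ∈ T, ((1:ℝ)/2) ^ (e j) ≤ 2 := by
  rw [← Finset.sum_image (f := fun i => ((1:ℝ)/2) ^ i) he]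
  exact geom_le_two _





def Noff (K : ℕ → ℕ) (j : ℕ) : ℕ := ∑ i ∈ Finset.range j, i * K i

def lvl (K : ℕ → ℕ) (x : ℕ) : ℕ := Nat.findGreatest (fun j => Noff K j ≤ x) (x+1)

def idx (K : ℕ → ℕ) (x : ℕ) : ℕ := (x - Noff K (lvl K x)) / K (lvl K x)

lemma Noff_succ (K : ℕ → ℕ) (j : ℕ) : Noff K (j+1) = Noff K j + j * K j :=
  Finset.sum_range_succ _ _

lemma Noff_one (K : ℕ → ℕ) : Noff K 1 = 0 := by simp [Noff]

lemma Noff_mono (K : ℕ → ℕ) : Monotone (Noff K) := by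
  intro a b hab
  exact Finset.sum_le_sum_of_subset (Finset.range_subset_range.2 hab)

lemma le_Noff_succ (K : ℕ → ℕ) (hK : ∀ j, 1 ≤ K j) : ∀ j, j ≤ Noff K (j+1) := by
  intro j
  induction j with
  | zero => simp
  | succ j ih =>
    rw [Noff_succ]
    have := hK (j+1)
    nlinarith [Noff_mono K (Nat.le_succ j)]

lemma lvl_pos (K : ℕ → ℕ) (x : ℕ) : 1 ≤ lvl K x :=
  Nat.le_findGreatest (by omega) (by simp [Noff_one])

lemma Noff_lvl_le (K : ℕ → ℕ) (x : ℕ) : Noff K (lvl K x) ≤ x := by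
  have h := Nat.findGreatest_spec (P := fun j => Noff K j ≤ x) (m := 1) (n := x+1)
    (by omega) (by simp [Noff_one])
  exact h

lemma lt_Noff_lvl_succ (K : ℕ → ℕ) (hK : ∀ j, 1 ≤ K j) (x : ℕ) :
    x < Noff K (lvl K x + 1) := by
  by_cases h : lvl K x + 1 ≤ x + 1
  · have h2 : ¬ (Noff K (lvl K x + 1) ≤ x) := by
      apply Nat.findGreatest_is_greatest (P := fun j => Noff K j ≤ x) (n := x+1) ?_ h
      exact Nat.lt_succ_of_le (le_of_eq rfl)
    omega
  · have hle : lvl K x ≤ x + 1 := Nat.findGreatest_le (x+1)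
    have : lvl K x = x + 1 := by omega
    rw [this]
    have := le_Noff_succ K hK (x+1)
    omega

/-- If `x` lies in block `(j, n)` then `lvl x = j`. -/
lemma lvl_eq (K : ℕ → ℕ) (hK : ∀ j, 1 ≤ K j) (j n x : ℕ) (hj : 1 ≤ j) (hn : n < j)
    (h1 : Noff K j + n * K j ≤ x) (h2 : x < Noff K j + (n+1) * K j) :
    lvl K x = j := by
  have hNx : Noff K j ≤ x := by omega
  have hxj : j ≤ x + 1 := by
    have hj1 : j - 1 ≤ Noff K j := by
      obtain ⟨j', rfl⟩ : ∃ j', j = j' + 1 := ⟨j - 1, by omega⟩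
      simpa using le_Noff_succ K hK j'
    omega
  have hge : j ≤ lvl K x := Nat.le_findGreatest hxj hNx
  by_contra hne
  have hgt : j + 1 ≤ lvl K x := by omega
  have hmono := Noff_mono K hgt
  rw [Noff_succ] at hmono
  have hfl := Noff_lvl_le K x
  have : (n+1) * K j ≤ j * K j := Nat.mul_le_mul_right _ (by omega)
  omega

lemma idx_eq (K : ℕ → ℕ) (hK : ∀ j, 1 ≤ K j) (j n x : ℕ) (hj : 1 ≤ j) (hn : n < j)
    (h1 : Noff K j + n * K j ≤ x) (h2 : x < Noff K j + (n+1) * K j) :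
    idx K x = n := by
  rw [idx, lvl_eq K hK j n x hj hn h1 h2]
  exact Nat.div_eq_of_lt_le (by omega) (by omega)

/-- Conversely: if `idx K x = n` then `x` lies in the block `(lvl x, n)` and `n < lvl x`. -/
lemma block_of_idx (K : ℕ → ℕ) (hK : ∀ j, 1 ≤ K j) (x n : ℕ) (h : idx K x = n) :
    Noff K (lvl K x) + n * K (lvl K x) ≤ x ∧
    x < Noff K (lvl K x) + (n+1) * K (lvl K x) ∧ n < lvl K x := by
  have hKpos : 0 < K (lvl K x) := hK _
  have hle := Noff_lvl_le K x
  have hlt := lt_Noff_lvl_succ K hK x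
  rw [Noff_succ] at hlt
  rw [idx] at h
  have hdm : K (lvl K x) * n + (x - Noff K (lvl K x)) % K (lvl K x)
      = x - Noff K (lvl K x) := by
    rw [← h, Nat.div_add_mod]
  have hm : (x - Noff K (lvl K x)) % K (lvl K x) < K (lvl K x) :=
    Nat.mod_lt _ hKpos
  have h1 : n * K (lvl K x) ≤ x - Noff K (lvl K x) := by
    have hcomm : n * K (lvl K x) = K (lvl K x) * n := by ring
    omega
  have h2 : x - Noff K (lvl K x) < (n+1) * K (lvl K x) := by
    have hcomm : (n+1) * K (lvl K x) = K (lvl K x) * n + K (lvl K x) := by ring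
    omega
  refine ⟨by omega, by omega, ?_⟩
  -- n < lvl x since x - Noff < lvl * K
  have hx' : x - Noff K (lvl K x) < lvl K x * K (lvl K x) := by omega
  by_contra hcon
  push_neg at hcon
  have : lvl K x * K (lvl K x) ≤ n * K (lvl K x) := Nat.mul_le_mul_right _ hcon
  omega



section SumBound

variable (s : ℕ → ℝ) (c : ℝ) (K : ℕ → ℕ)

/-- the value of a block at level `j` -/
noncomputable def vv (j : ℕ) : ℝ := s (K j) / K j

variable (hc : 0 < c)
  (hpos : ∀ n, 1 ≤ n → 0 < s n)
  (hinc : ∀ m n, 1 ≤ m → m ≤ n → s m ≤ s n)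
  (hw : ∀ m n, 1 ≤ m → m ≤ n → c * w s n ≤ w s m)
  (hK1 : ∀ j, 1 ≤ K j)
  (hv2 : ∀ j, 2 * ((K j : ℝ) * s (K (j+1))) ≤ (K (j+1) : ℝ) * s (K j))
  (hs2 : ∀ j, 2 * s (K j) ≤ s (K (j+1)))

include hpos hK1 in
lemma vv_nonneg : ∀ j, 0 ≤ vv s K j := by
  intro j
  have := hpos (K j) (hK1 j)
  have : (0:ℝ) < (K j : ℝ) := by exact_mod_cast hK1 j
  unfold vv; positivity

include hpos hK1 in
lemma vv_mul_K (j : ℕ) : (K j : ℝ) * vv s K j = s (K j) := by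
  have hKj : ((K j : ℝ)) ≠ 0 := by
    have := hK1 j; positivity
  unfold vv; field_simp

include hpos hc hK1 hv2 in
lemma vv_halving : ∀ d j, vv s K (j + d) ≤ (1/2)^d * vv s K j := by
  intro d
  induction d with
  | zero => intro j; simp
  | succ d ih =>
    intro j
    have h1 : vv s K (j + d + 1) ≤ (1/2) * vv s K (j + d) := by
      have hK1' : (0:ℝ) < (K (j+d) : ℝ) := by exact_mod_cast hK1 (j+d)
      have hK2' : (0:ℝ) < (K (j+d+1) : ℝ) := by exact_mod_cast hK1 (j+d+1)
      unfold vv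
      rw [div_le_iff₀ hK2', mul_comm ((1:ℝ)/2), mul_assoc, div_mul_eq_mul_div,
        le_div_iff₀ hK1']
      have := hv2 (j+d)
      nlinarith
    have h2 := ih j
    have hnn := vv_nonneg s K hpos hK1 (j + d)
    calc vv s K (j + (d+1)) = vv s K (j + d + 1) := by ring_nf
      _ ≤ (1/2) * vv s K (j+d) := h1
      _ ≤ (1/2) * ((1/2)^d * vv s K j) := by linarith
      _ = (1/2)^(d+1) * vv s K j := by ring

include hpos hK1 hs2 in
lemma sK_growth : ∀ d j, s (K j) ≤ (1/2)^d * s (K (j + d)) := by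
  intro d
  induction d with
  | zero => intro j; simp
  | succ d ih =>
    intro j
    have h1 := hs2 (j + d)
    have h2 := ih j
    have h3 : (0:ℝ) < s (K (j + d + 1)) := hpos _ (hK1 _)
    calc s (K j) ≤ (1/2)^d * s (K (j+d)) := h2
      _ ≤ (1/2)^d * ((1/2) * s (K (j + d + 1))) := by
          have : (0:ℝ) ≤ (1/2:ℝ)^d := by positivity
          have : s (K (j+d)) ≤ (1/2) * s (K (j+d+1)) := by linarith
          nlinarith [pow_nonneg (by norm_num : (0:ℝ) ≤ 1/2) d]
      _ = (1/2)^(d+1) * s (K (j + (d+1))) := by ring_nf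

include hc hpos hinc hw hK1 hv2 hs2 in
/-- The central estimate: for any finite `A` and any `n`, the `n`-th vector sums
to at most `C₃ * s |A|` over `A`. -/
lemma sum_f_le (n : ℕ) (A : Finset ℕ) (hA : A.Nonempty) :
    ∑ x ∈ A, (if idx K x = n then vv s K (lvl K x) else 0)
      ≤ (2 + 2 * ((c+1)/c)) * s A.card := by
  classical
  set R := A.card with hR
  have hR1 : 1 ≤ R := Finset.card_pos.mpr hA
  have hsR : 0 < s R := hpos R hR1
  set A' := A.filter (fun x => idx K x = n) with hA'
  have e1 : ∑ x ∈ A, (if idx K x = n then vv s K (lvl K x) else 0)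
      = ∑ x ∈ A', vv s K (lvl K x) := (Finset.sum_filter _ _).symm
  rw [e1, Finset.sum_comp (vv s K) (lvl K)]
  set S := A'.image (lvl K) with hS
  set r : ℕ → ℕ := fun j => (A'.filter (fun x => lvl K x = j)).card with hr
  -- fiber cardinality bounds
  have hrK : ∀ j, r j ≤ K j := by
    intro j
    have hsub : A'.filter (fun x => lvl K x = j) ⊆
        Finset.Ico (Noff K j + n * K j) (Noff K j + (n+1) * K j) := by
      intro x hx
      simp only [Finset.mem_filter, hA'] at hx
      obtain ⟨⟨_, hidx⟩, hlvl⟩ := hx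
      obtain ⟨hb1, hb2, _⟩ := block_of_idx K hK1 x n hidx
      rw [hlvl] at hb1 hb2
      simp only [Finset.mem_Ico]
      exact ⟨hb1, hb2⟩
    calc r j ≤ (Finset.Ico (Noff K j + n * K j) (Noff K j + (n+1) * K j)).card :=
          Finset.card_le_card hsub
      _ = K j := by rw [Nat.card_Ico]; ring_nf; omega
  have hrR : ∀ j, r j ≤ R := by
    intro j
    calc r j ≤ A'.card := Finset.card_le_card (Finset.filter_subset _ _)
      _ ≤ A.card := Finset.card_le_card (Finset.filter_subset _ _)
  -- split S by whether K j ≤ R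
  rw [← Finset.sum_filter_add_sum_filter_not S (fun j => K j ≤ R)]
  have hbound1 : ∑ j ∈ S.filter (fun j => K j ≤ R), r j • vv s K j ≤ 2 * s R := by
    set S₁ := S.filter (fun j => K j ≤ R) with hS₁
    rcases S₁.eq_empty_or_nonempty with h | h
    · rw [h]; simp; positivity
    · set J := S₁.max' h with hJ
      have hJS : J ∈ S₁ := S₁.max'_mem h
      have hKJR : K J ≤ R := (Finset.mem_filter.1 hJS).2
      have step : ∀ j ∈ S₁, r j • vv s K j ≤ (1/2)^(J - j) * s (K J) := by
        intro j hj
        have hjJ : j ≤ J := S₁.le_max' j hj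
        have hKjR : K j ≤ R := (Finset.mem_filter.1 hj).2
        have h1 : (r j : ℝ) * vv s K j ≤ (K j : ℝ) * vv s K j := by
          apply mul_le_mul_of_nonneg_right _ (vv_nonneg s K hpos hK1 j)
          exact_mod_cast hrK j
        have h2 : (K j : ℝ) * vv s K j = s (K j) := vv_mul_K s K hpos hK1 j
        have h3 : s (K j) ≤ (1/2)^(J-j) * s (K J) := by
          have := sK_growth s K hpos hK1 hs2 (J - j) j
          rwa [Nat.add_sub_cancel' hjJ] at this
        rw [nsmul_eq_mul]
        linarith
      calc ∑ j ∈ S₁, r j • vv s K j ≤ ∑ j ∈ S₁, (1/2)^(J-j) * s (K J) :=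
            Finset.sum_le_sum step
        _ = (∑ j ∈ S₁, ((1:ℝ)/2)^(J-j)) * s (K J) := by rw [← Finset.sum_mul]
        _ ≤ 2 * s (K J) := by
            apply mul_le_mul_of_nonneg_right _ (hpos _ (hK1 J)).le
            apply geom_image_le_two S₁ (fun j => J - j)
            intro x hx y hy hxy
            have hxJ := S₁.le_max' x hx
            have hyJ := S₁.le_max' y hy
            omega
        _ ≤ 2 * s R := by
            have := hinc (K J) R (hK1 J) hKJR
            linarith
  have hbound2 : ∑ j ∈ S.filter (fun j => ¬ K j ≤ R), r j • vv s K j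
      ≤ 2 * ((c+1)/c) * s R := by
    set S₂ := S.filter (fun j => ¬ K j ≤ R) with hS₂
    rcases S₂.eq_empty_or_nonempty with h | h
    · rw [h]; simp; positivity
    · set j₀ := S₂.min' h with hj₀
      have hj₀S : j₀ ∈ S₂ := S₂.min'_mem h
      have hRK : R < K j₀ := by
        have := (Finset.mem_filter.1 hj₀S).2; omega
      have hRv : (R:ℝ) * vv s K j₀ ≤ ((c+1)/c) * s R := by
        have hkey := key s c hc hpos hw R (K j₀) hR1 hRK.le
        have hKpos : (0:ℝ) < (K j₀ : ℝ) := by exact_mod_cast hK1 j₀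
        unfold vv
        rw [mul_div_assoc', div_le_iff₀ hKpos]
        have hre : (c + 1) / c * s R * (K j₀ : ℝ) = ((c+1) * ((K j₀ : ℝ) * s R)) / c := by
          ring
        rw [hre, le_div_iff₀ hc]
        nlinarith
      have step : ∀ j ∈ S₂, r j • vv s K j ≤ (1/2)^(j - j₀) * ((R:ℝ) * vv s K j₀) := by
        intro j hj
        have hj₀j : j₀ ≤ j := S₂.min'_le j hj
        have h1 : (r j : ℝ) * vv s K j ≤ (R : ℝ) * vv s K j := by
          apply mul_le_mul_of_nonneg_right _ (vv_nonneg s K hpos hK1 j)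
          exact_mod_cast hrR j
        have h2 : vv s K j ≤ (1/2)^(j - j₀) * vv s K j₀ := by
          have := vv_halving s c K hc hpos hK1 hv2 (j - j₀) j₀
          rwa [Nat.add_sub_cancel' hj₀j] at this
        have hRnn : (0:ℝ) ≤ R := by positivity
        rw [nsmul_eq_mul]
        calc (r j : ℝ) * vv s K j ≤ (R:ℝ) * vv s K j := h1
          _ ≤ (R:ℝ) * ((1/2)^(j-j₀) * vv s K j₀) := by
              apply mul_le_mul_of_nonneg_left h2 hRnn
          _ = (1/2)^(j-j₀) * ((R:ℝ) * vv s K j₀) := by ring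
      calc ∑ j ∈ S₂, r j • vv s K j
          ≤ ∑ j ∈ S₂, (1/2)^(j-j₀) * ((R:ℝ) * vv s K j₀) := Finset.sum_le_sum step
        _ = (∑ j ∈ S₂, ((1:ℝ)/2)^(j-j₀)) * ((R:ℝ) * vv s K j₀) := by
            rw [← Finset.sum_mul]
        _ ≤ 2 * ((R:ℝ) * vv s K j₀) := by
            apply mul_le_mul_of_nonneg_right
            · apply geom_image_le_two S₂ (fun j => j - j₀)
              intro x hx y hy hxy
              have hx0 := S₂.min'_le x hx
              have hy0 := S₂.min'_le y hy
              omega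
            · have h0 : (0:ℝ) ≤ (R:ℝ) := by positivity
              exact mul_nonneg h0 (vv_nonneg s K hpos hK1 j₀)
        _ ≤ 2 * ((c+1)/c) * s R := by nlinarith
  nlinarith

end SumBound


lemma marcBound (s : ℕ → ℝ) (hpos : ∀ n, 1 ≤ n → 0 < s n) (g : ℕ → ℝ) (B : ℝ)
    (hB : 0 ≤ B) (h : ∀ A : Finset ℕ, A.Nonempty → ∑ j ∈ A, |g j| ≤ B * s A.card) :
    MemMarc s g ∧ marcNorm s g ≤ B := by
  have hub : ∀ r ∈ marcSet s g, r ≤ B := by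
    rintro r ⟨A, hA, rfl⟩
    have hs := hpos A.card (Finset.card_pos.mpr hA)
    rw [div_le_iff₀ hs]
    exact h A hA
  exact ⟨⟨B, fun x hx => hub x hx⟩, Real.sSup_le hub hB⟩

end MarcAux

open MarcAux

/-- Let `s` be an increasing weight (indexed from `1`) whose discrete derivative
`w n = s n - s (n-1)` (with `w 1 = s 1`) is essentially decreasing, and suppose
`inf_n sup_k s k / s (k*n) > 0`.  Then `m(s)` contains a disjointly supported sequence
equivalent to the unit vector basis of `ℓ₁`. -/
theorem marcinkiewicz_contains_l1
    (s : ℕ → ℝ) (hpos : ∀ n, 1 ≤ n → 0 < s n)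
    (hinc : ∀ m n, 1 ≤ m → m ≤ n → s m ≤ s n)
    (hessdec : ∃ c : ℝ, 0 < c ∧ ∀ m n, 1 ≤ m → m ≤ n →
      c * (if n = 1 then s 1 else s n - s (n - 1)) ≤
        (if m = 1 then s 1 else s m - s (m - 1)))
    (hS : ∃ δ : ℝ, 0 < δ ∧ ∀ n : ℕ, 1 ≤ n → ∃ k : ℕ, 1 ≤ k ∧ δ ≤ s k / s (k * n)) :
    ∃ f : ℕ → ℕ → ℝ,
      (∀ n n', n ≠ n' → ∀ j, f n j = 0 ∨ f n' j = 0) ∧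
      (∀ n, MemMarc s (f n)) ∧
      ∃ c C : ℝ, 0 < c ∧
        ∀ (a : ℕ → ℝ) (t : Finset ℕ),
          c * ∑ n ∈ t, |a n| ≤ marcNorm s (fun j => ∑ n ∈ t, a n * f n j) ∧
          marcNorm s (fun j => ∑ n ∈ t, a n * f n j) ≤ C * ∑ n ∈ t, |a n| := by
  classical
  obtain ⟨c0, hc0, hwdec⟩ := hessdec
  obtain ⟨δ, hδ, hSk⟩ := hS
  have hw : ∀ m n, 1 ≤ m → m ≤ n → c0 * MarcAux.w s n ≤ MarcAux.w s m := by
    intro m n h1 h2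
    have := hwdec m n h1 h2
    simpa [MarcAux.w] using this
  have hs1 : 0 < s 1 := hpos 1 le_rfl
  by_cases hbd : ∃ M : ℝ, ∀ n, 1 ≤ n → s n ≤ M
  · -- bounded case : use unit vectors
    obtain ⟨M, hM⟩ := hbd
    have hM1 : 0 < M := lt_of_lt_of_le hs1 (hM 1 le_rfl)
    set f : ℕ → ℕ → ℝ := fun n x => if x = n then 1 else 0 with hf
    have hupper : ∀ (a : ℕ → ℝ) (t : Finset ℕ),
        MemMarc s (fun j => ∑ n ∈ t, a n * f n j) ∧
        marcNorm s (fun j => ∑ n ∈ t, a n * f n j) ≤ (1 / s 1) * ∑ n ∈ t, |a n| := by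
      intro a t
      have habs : 0 ≤ ∑ n ∈ t, |a n| := Finset.sum_nonneg fun _ _ => abs_nonneg _
      apply marcBound s hpos _ _ (by positivity)
      intro A hA
      have hgx : ∀ x, (∑ n ∈ t, a n * f n x) = if x ∈ t then a x else 0 := by
        intro x
        simp only [hf, mul_ite, mul_one, mul_zero]
        exact Finset.sum_ite_eq t x a
      have h1 : ∑ j ∈ A, |∑ n ∈ t, a n * f n j| ≤ ∑ n ∈ t, |a n| := by
        calc ∑ j ∈ A, |∑ n ∈ t, a n * f n j|
            = ∑ j ∈ A, |if j ∈ t then a j else 0| := by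
              apply Finset.sum_congr rfl; intro j _; rw [hgx j]
          _ = ∑ j ∈ A ∩ t, |a j| := by
              rw [← Finset.sum_ite_mem A t (fun j => |a j|)]
              apply Finset.sum_congr rfl
              intro j _
              rw [apply_ite abs, abs_zero]
          _ ≤ ∑ n ∈ t, |a n| :=
              Finset.sum_le_sum_of_subset_of_nonneg (Finset.inter_subset_right)
                (fun _ _ _ => abs_nonneg _)
      have h2 : s 1 ≤ s A.card := hinc 1 A.card le_rfl (Finset.card_pos.mpr hA)
      calc ∑ j ∈ A, |∑ n ∈ t, a n * f n j| ≤ ∑ n ∈ t, |a n| := h1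
        _ = ((1 / s 1) * ∑ n ∈ t, |a n|) * s 1 := by field_simp
        _ ≤ ((1 / s 1) * ∑ n ∈ t, |a n|) * s A.card := by
            apply mul_le_mul_of_nonneg_left h2 (by positivity)
    refine ⟨f, ?_, ?_, 1 / M, 1 / s 1, by positivity, ?_⟩
    · intro n n' hne j
      by_cases hj : j = n
      · right; simp only [hf, hj]
        rw [if_neg hne]
      · left; simp [hf, hj]
    · intro n
      have := hupper (fun _ => 1) {n}
      simp only [Finset.sum_singleton, one_mul] at this
      exact this.1
    · intro a t
      refine ⟨?_, (hupper a t).2⟩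
      have hmem := (hupper a t).1
      rcases t.eq_empty_or_nonempty with rfl | ht
      · simp only [Finset.sum_empty, mul_zero]
        have h0 : (0:ℝ) ∈ marcSet s (fun j => ∑ n ∈ (∅ : Finset ℕ), a n * f n j) := by
          refine ⟨{0}, Finset.singleton_nonempty 0, ?_⟩
          simp
        exact le_csSup hmem h0
      · have hg : ∀ x ∈ t, |∑ n ∈ t, a n * f n x| = |a x| := by
          intro x hx
          have : (∑ n ∈ t, a n * f n x) = if x ∈ t then a x else 0 := by
            simp only [hf, mul_ite, mul_one, mul_zero]
            exact Finset.sum_ite_eq t x a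
          rw [this, if_pos hx]
        have hval : ((∑ j ∈ t, |∑ n ∈ t, a n * f n j|) / s t.card)
            ∈ marcSet s (fun j => ∑ n ∈ t, a n * f n j) := ⟨t, ht, rfl⟩
        have heq : ∑ j ∈ t, |∑ n ∈ t, a n * f n j| = ∑ n ∈ t, |a n| :=
          Finset.sum_congr rfl hg
        have hle : (∑ n ∈ t, |a n|) / s t.card
            ≤ marcNorm s (fun j => ∑ n ∈ t, a n * f n j) := by
          have h := le_csSup hmem hval
          rw [heq] at h
          exact h
        have hcard : 1 ≤ t.card := Finset.card_pos.mpr ht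
        have hsM : s t.card ≤ M := hM t.card hcard
        have hsc : 0 < s t.card := hpos t.card hcard
        have habs : 0 ≤ ∑ n ∈ t, |a n| := Finset.sum_nonneg fun _ _ => abs_nonneg _
        have : (1 / M) * ∑ n ∈ t, |a n| ≤ (∑ n ∈ t, |a n|) / s t.card := by
          rw [le_div_iff₀ hsc]
          calc 1 / M * (∑ n ∈ t, |a n|) * s t.card
              ≤ 1 / M * (∑ n ∈ t, |a n|) * M := by
                apply mul_le_mul_of_nonneg_left hsM (by positivity)
            _ = ∑ n ∈ t, |a n| := by field_simp
        linarith
  · -- unbounded case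
    push_neg at hbd
    have hub : ∀ M : ℝ, ∃ m : ℕ, 1 ≤ m ∧ M < s m := by
      intro M; obtain ⟨m, hm1, hm2⟩ := hbd M; exact ⟨m, hm1, by linarith⟩
    have hs1c : ∀ r : ℕ, 1 ≤ r → c0 * s r ≤ (r:ℝ) * s 1 := by
      intro r hr
      have : c0 * s r = ∑ l ∈ Finset.Icc 1 r, c0 * MarcAux.w s l := by
        rw [← Finset.mul_sum, MarcAux.sum_w s r hr]
      rw [this]
      have hbound : ∀ l ∈ Finset.Icc 1 r, c0 * MarcAux.w s l ≤ s 1 := by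
        intro l hl
        simp only [Finset.mem_Icc] at hl
        have := hw 1 l le_rfl hl.1
        simp only [MarcAux.w, if_pos rfl] at this
        exact this
      calc ∑ l ∈ Finset.Icc 1 r, c0 * MarcAux.w s l ≤ ∑ l ∈ Finset.Icc 1 r, s 1 :=
            Finset.sum_le_sum hbound
        _ = (r:ℝ) * s 1 := by
            rw [Finset.sum_const, Nat.card_Icc, nsmul_eq_mul]
            have hx : r + 1 - 1 = r := by omega
            rw [hx]
    -- the recursive choice of block lengths
    have hstep : ∀ (j p : ℕ), 1 ≤ p → ∃ k : ℕ, 1 ≤ k ∧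
        δ * s ((j+1) * k) ≤ s k ∧
        2 * ((p:ℝ) * s k) ≤ (k:ℝ) * s p ∧
        2 * s p ≤ s k := by
      intro j p hp
      obtain ⟨m₁, hm₁1, hm₁⟩ := hub (2 * s p)
      set m₂ : ℕ := ⌈(2*(p:ℝ))/(c0*δ)⌉₊ + 1 with hm₂def
      set m : ℕ := max m₁ m₂ with hmdef
      have hm1 : 1 ≤ m := le_trans hm₁1 (le_max_left _ _)
      obtain ⟨k₀, hk₀1, hk₀⟩ := hSk ((j+1) * m) (Nat.mul_pos (Nat.succ_pos j) hm1)
      set k : ℕ := m * k₀ with hkdef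
      have hk1 : 1 ≤ k := by rw [hkdef]; exact Nat.mul_pos hm1 hk₀1
      have hposn : 0 < s (k₀ * ((j+1) * m)) :=
        hpos _ (Nat.mul_pos hk₀1 (Nat.mul_pos (Nat.succ_pos j) hm1))
      have hkey₀ : δ * s (k₀ * ((j+1) * m)) ≤ s k₀ := by
        rw [le_div_iff₀ hposn] at hk₀; linarith
      refine ⟨k, hk1, ?_, ?_, ?_⟩
      · -- δ * s ((j+1) * k) ≤ s k
        have he : (j+1) * k = k₀ * ((j+1) * m) := by rw [hkdef]; ring
        rw [he]
        have : s k₀ ≤ s k :=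
          hinc k₀ k hk₀1 (by rw [hkdef]; exact Nat.le_mul_of_pos_left k₀ (by omega))
        linarith
      · -- 2 * (p * s k) ≤ k * s p
        have hm2 : (2*(p:ℝ)) ≤ (m:ℝ) * (c0 * δ) := by
          have h1 : ((m₂:ℝ)) ≤ m := by exact_mod_cast le_max_right m₁ m₂
          have h2 : (2*(p:ℝ))/(c0*δ) ≤ (⌈(2*(p:ℝ))/(c0*δ)⌉₊ : ℝ) := Nat.le_ceil _
          have h3 : ((⌈(2*(p:ℝ))/(c0*δ)⌉₊ : ℝ)) + 1 = (m₂ : ℝ) := by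
            rw [hm₂def]; push_cast; ring
          have hcδ : 0 < c0 * δ := by positivity
          rw [div_le_iff₀ hcδ] at h2
          nlinarith
        have hmono : s k ≤ s (k₀ * ((j+1)*m)) := by
          apply hinc k _ hk1
          calc k = m * k₀ := hkdef
            _ ≤ ((j+1)*m) * k₀ :=
                Nat.mul_le_mul_right k₀ (Nat.le_mul_of_pos_left m (Nat.succ_pos j))
            _ = k₀ * ((j+1)*m) := by ring
        have hAx : c0 * (δ * s k) ≤ (k₀:ℝ) * s 1 := by
          have h4 : δ * s k ≤ s k₀ := by
            have := mul_le_mul_of_nonneg_left hmono hδ.le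
            linarith [hkey₀]
          have h5 := hs1c k₀ hk₀1
          nlinarith
        have hskpos : 0 < s k := hpos k hk1
        have hsp : s 1 ≤ s p := hinc 1 p le_rfl hp
        have hcast : (k:ℝ) = (m:ℝ) * (k₀:ℝ) := by rw [hkdef]; push_cast; ring
        rw [hcast]
        have hm0 : (0:ℝ) ≤ m := by positivity
        have hk₀0 : (0:ℝ) ≤ (k₀:ℝ) := by positivity
        nlinarith [mul_le_mul_of_nonneg_left hAx hm0,
          mul_le_mul_of_nonneg_left hsp (mul_nonneg hm0 hk₀0),
          mul_le_mul_of_nonneg_right hm2 hskpos.le]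
      · -- 2 * s p ≤ s k
        have h1 : s m₁ ≤ s m := hinc m₁ m hm₁1 (le_max_left _ _)
        have h2 : s m ≤ s k := hinc m k hm1 (by rw [hkdef]; exact Nat.le_mul_of_pos_right m hk₀1)
        linarith
    -- Skolemize the recursive step and build the sequence of block lengths
    choose! F hF using hstep
    obtain ⟨K, hK0, hKsucc⟩ : ∃ K : ℕ → ℕ, K 0 = 1 ∧ ∀ j, K (j+1) = F j (K j) :=
      ⟨fun j => Nat.rec 1 (fun j ih => F j ih) j, rfl, fun _ => rfl⟩
    have hK1 : ∀ j, 1 ≤ K j := by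
      intro j
      induction j with
      | zero => rw [hK0]
      | succ j ih => rw [hKsucc]; exact (hF j (K j) ih).1
    have hKb : ∀ j, δ * s ((j+1) * K (j+1)) ≤ s (K (j+1)) := by
      intro j; rw [hKsucc]; exact (hF j (K j) (hK1 j)).2.1
    have hv2 : ∀ j, 2 * ((K j : ℝ) * s (K (j+1))) ≤ (K (j+1) : ℝ) * s (K j) := by
      intro j; rw [hKsucc]; exact (hF j (K j) (hK1 j)).2.2.1
    have hs2 : ∀ j, 2 * s (K j) ≤ s (K (j+1)) := by
      intro j; rw [hKsucc]; exact (hF j (K j) (hK1 j)).2.2.2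
    set C₃ : ℝ := 2 + 2 * ((c0+1)/c0) with hC₃
    have hC₃0 : 0 ≤ C₃ := by rw [hC₃]; positivity
    set f : ℕ → ℕ → ℝ :=
      fun n x => if MarcAux.idx K x = n then MarcAux.vv s K (MarcAux.lvl K x) else 0 with hf
    have hfnn : ∀ n x, 0 ≤ f n x := by
      intro n x
      simp only [hf]
      split
      · exact vv_nonneg s K hpos hK1 _
      · exact le_rfl
    have hsum : ∀ n (A : Finset ℕ), A.Nonempty → ∑ x ∈ A, f n x ≤ C₃ * s A.card := by
      intro n A hA
      simp only [hf]
      exact sum_f_le s c0 K hc0 hpos hinc hw hK1 hv2 hs2 n A hA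
    have hupper : ∀ (a : ℕ → ℝ) (t : Finset ℕ),
        MemMarc s (fun j => ∑ n ∈ t, a n * f n j) ∧
        marcNorm s (fun j => ∑ n ∈ t, a n * f n j) ≤ C₃ * ∑ n ∈ t, |a n| := by
      intro a t
      have habs : 0 ≤ ∑ n ∈ t, |a n| := Finset.sum_nonneg fun _ _ => abs_nonneg _
      apply marcBound s hpos _ _ (by positivity)
      intro A hA
      have h1 : ∀ x, |∑ n ∈ t, a n * f n x| ≤ ∑ n ∈ t, |a n| * f n x := by
        intro x
        calc |∑ n ∈ t, a n * f n x| ≤ ∑ n ∈ t, |a n * f n x| :=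
              Finset.abs_sum_le_sum_abs _ _
          _ = ∑ n ∈ t, |a n| * f n x := by
              apply Finset.sum_congr rfl; intro n _
              rw [abs_mul, abs_of_nonneg (hfnn n x)]
      calc ∑ j ∈ A, |∑ n ∈ t, a n * f n j| ≤ ∑ j ∈ A, ∑ n ∈ t, |a n| * f n j :=
            Finset.sum_le_sum (fun j _ => h1 j)
        _ = ∑ n ∈ t, |a n| * ∑ j ∈ A, f n j := by
            rw [Finset.sum_comm]
            apply Finset.sum_congr rfl; intro n _
            rw [Finset.mul_sum]
        _ ≤ ∑ n ∈ t, |a n| * (C₃ * s A.card) := by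
            apply Finset.sum_le_sum; intro n _
            exact mul_le_mul_of_nonneg_left (hsum n A hA) (abs_nonneg _)
        _ = (C₃ * ∑ n ∈ t, |a n|) * s A.card := by rw [← Finset.sum_mul]; ring
    refine ⟨f, ?_, ?_, δ, C₃, hδ, ?_⟩
    · -- disjoint supports
      intro n n' hne x
      simp only [hf]
      by_cases h : MarcAux.idx K x = n
      · right; rw [if_neg (by omega)]
      · left; rw [if_neg h]
    · -- each f n is in the Marcinkiewicz space
      intro n
      obtain ⟨hm, _⟩ := hupper (fun _ => 1) {n}
      simp only [Finset.sum_singleton, one_mul] at hm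
      exact hm
    · intro a t
      refine ⟨?_, (hupper a t).2⟩
      have hmem := (hupper a t).1
      rcases t.eq_empty_or_nonempty with rfl | ht
      · simp only [Finset.sum_empty, mul_zero]
        have h0 : (0:ℝ) ∈ marcSet s (fun j => ∑ n ∈ (∅:Finset ℕ), a n * f n j) :=
          ⟨{0}, Finset.singleton_nonempty 0, by simp⟩
        exact le_csSup hmem h0
      · -- the lower ℓ₁-estimate
        set J := t.max' ht + 1 with hJ
        set B : ℕ → Finset ℕ :=
          fun n => Finset.Ico (Noff K J + n * K J) (Noff K J + (n+1) * K J) with hB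
        have hBcard : ∀ n, (B n).card = K J := by
          intro n; simp only [hB]; rw [Nat.card_Ico]
          have h : (n+1) * K J = n * K J + K J := by ring
          omega
        have hBdisj : ∀ n n', n ≠ n' → Disjoint (B n) (B n') := by
          intro n n' hne
          rw [Finset.disjoint_left]
          intro x hx hx'
          simp only [hB, Finset.mem_Ico] at hx hx'
          rcases Nat.lt_or_ge n n' with h | h
          · have h2 : (n+1) * K J ≤ n' * K J := Nat.mul_le_mul_right (K J) h
            omega
          · have h' : n' + 1 ≤ n := by omega
            have h2 : (n'+1) * K J ≤ n * K J := Nat.mul_le_mul_right (K J) h'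
            omega
        have hBne : ∀ n, (B n).Nonempty := by
          intro n
          simp only [hB]
          rw [Finset.nonempty_Ico]
          have h1 := hK1 J
          have h2 : n * K J + K J = (n+1) * K J := by ring
          omega
        obtain ⟨x₀, hx₀⟩ := hBne (t.max' ht)
        have hAne : (t.biUnion B).Nonempty :=
          ⟨x₀, Finset.mem_biUnion.mpr ⟨t.max' ht, t.max'_mem ht, hx₀⟩⟩
        have hcardA : (t.biUnion B).card = t.card * K J := by
          rw [Finset.card_biUnion (fun n _ n' _ h => hBdisj n n' h)]
          rw [Finset.sum_congr rfl (fun n _ => hBcard n), Finset.sum_const, smul_eq_mul]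
        have hlvlidx : ∀ n ∈ t, ∀ x ∈ B n,
            MarcAux.lvl K x = J ∧ MarcAux.idx K x = n := by
          intro n hn x hx
          simp only [hB, Finset.mem_Ico] at hx
          have hnJ : n < J := by
            have := t.le_max' n hn; omega
          exact ⟨lvl_eq K hK1 J n x (by omega) hnJ hx.1 hx.2,
                 idx_eq K hK1 J n x (by omega) hnJ hx.1 hx.2⟩
        have hgval : ∀ n ∈ t, ∀ x ∈ B n,
            (∑ n' ∈ t, a n' * f n' x) = a n * vv s K J := by
          intro n hn x hx
          obtain ⟨hl, hi⟩ := hlvlidx n hn x hx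
          rw [Finset.sum_eq_single n]
          · simp only [hf]; rw [hi, if_pos rfl, hl]
          · intro n' hn' hne
            simp only [hf]; rw [hi, if_neg (fun hh => hne hh.symm), mul_zero]
          · intro h; exact absurd hn h
        have hvnn : 0 ≤ vv s K J := vv_nonneg s K hpos hK1 J
        have hsumA : ∑ x ∈ t.biUnion B, |∑ n' ∈ t, a n' * f n' x|
            = (∑ n ∈ t, |a n|) * s (K J) := by
          rw [Finset.sum_biUnion (fun n _ n' _ hne => hBdisj n n' hne)]
          have hinner : ∀ n ∈ t, ∑ x ∈ B n, |∑ n' ∈ t, a n' * f n' x|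
              = |a n| * s (K J) := by
            intro n hn
            have : ∀ x ∈ B n, |∑ n' ∈ t, a n' * f n' x| = |a n| * vv s K J := by
              intro x hx
              rw [hgval n hn x hx, abs_mul, abs_of_nonneg hvnn]
            rw [Finset.sum_congr rfl this, Finset.sum_const, hBcard n, nsmul_eq_mul]
            rw [← vv_mul_K s K hpos hK1 J]
            ring
          rw [Finset.sum_congr rfl hinner, ← Finset.sum_mul]
        have hval : ((∑ n ∈ t, |a n|) * s (K J)) / s ((t.biUnion B).card)
            ∈ marcSet s (fun j => ∑ n' ∈ t, a n' * f n' j) := by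
          refine ⟨t.biUnion B, hAne, ?_⟩
          rw [hsumA]
        rw [hcardA] at hval
        have hle : ((∑ n ∈ t, |a n|) * s (K J)) / s (t.card * K J)
            ≤ marcNorm s (fun j => ∑ n' ∈ t, a n' * f n' j) :=
          le_csSup hmem hval
        have htc1 : 1 ≤ t.card := Finset.card_pos.mpr ht
        have htcJ : t.card ≤ J := by
          have hsub : t ⊆ Finset.range J := by
            intro x hx; rw [Finset.mem_range]
            have := t.le_max' x hx; omega
          calc t.card ≤ (Finset.range J).card := Finset.card_le_card hsub
            _ = J := Finset.card_range J
        have hmono1 : s (t.card * K J) ≤ s (J * K J) :=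
          hinc _ _ (Nat.mul_pos htc1 (hK1 J)) (Nat.mul_le_mul_right _ htcJ)
        have hKb' : δ * s (J * K J) ≤ s (K J) := by
          have h := hKb (t.max' ht)
          rw [← hJ] at h
          exact h
        have hq : δ * s (t.card * K J) ≤ s (K J) := by nlinarith
        have hspos : 0 < s (t.card * K J) := hpos _ (Nat.mul_pos htc1 (hK1 J))
        have habs : 0 ≤ ∑ n ∈ t, |a n| := Finset.sum_nonneg fun _ _ => abs_nonneg _
        have hfin : δ * ∑ n ∈ t, |a n|
            ≤ ((∑ n ∈ t, |a n|) * s (K J)) / s (t.card * K J) := by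
          rw [le_div_iff₀ hspos]
          have h := mul_le_mul_of_nonneg_left hq habs
          nlinarith
        linarith
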